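/- For each integer k with 1 ≤ k ≤ 6, the polynomial p_k(ζ) = ∑_{i=1}^{k} (1−ζ)^{i−1} / i! has no zero in the closed unit disc {ζ ∈ ℂ : |ζ| ≤ 1}; consequently δ_k(ζ) = (1−ζ) p_k(ζ), so the zero of δ_k at ζ = 1 is simple and is its only zero in the closed unit disc. -/

import Mathlib

open Real

/-- The k-th order BDF generating polynomial δ_k(ζ) = ∑_{i=1}^{k} (1-ζ)^i / i!. -/
noncomputable def bdfDelta (k : ℕ) (ζ : ℂ) : ℂ :=
  ∑ i ∈ Finset.Icc 1 k, (1 - ζ) ^ i / (Nat.factorial i : ℂ)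

/-- The cofactor polynomial p_k(ζ) = ∑_{i=1}^{k} (1-ζ)^{i-1} / i!. -/
noncomputable def bdfP (k : ℕ) (ζ : ℂ) : ℂ :=
  ∑ i ∈ Finset.Icc 1 k, (1 - ζ) ^ (i - 1) / (Nat.factorial i : ℂ)

/-- p_k has no zero in the closed unit disc and δ_k(ζ) = (1−ζ)·p_k(ζ), so the
zero of δ_k at ζ = 1 is simple and is its only zero in the closed unit disc. -/
theorem bdfDelta_simple_zero (k : ℕ) (hk1 : 1 ≤ k) (hk6 : k ≤ 6) :
    (∀ ζ : ℂ, ‖ζ‖ ≤ 1 → bdfP k ζ ≠ 0) ∧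
      ∀ ζ : ℂ, bdfDelta k ζ = (1 - ζ) * bdfP k ζ := by
  constructor
  · intro ζ hζ h0
    have hab : ζ.re ^ 2 + ζ.im ^ 2 ≤ 1 := by
      have h1 := Complex.sq_norm ζ
      rw [Complex.normSq_apply] at h1
      nlinarith [norm_nonneg ζ]
    have hx : (0:ℝ) ≤ 1 - ζ.re := by nlinarith [sq_nonneg ζ.im, sq_nonneg (1-ζ.re)]
    have hd : (0:ℝ) ≤ 1 - ζ.re^2 - ζ.im^2 := by linarith
    interval_cases k
    · norm_num [bdfP, show Finset.Icc 1 1 = ({1} : Finset ℕ) from rfl] at h0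
    · simp only [bdfP, show Finset.Icc 1 2 = ({1,2} : Finset ℕ) from rfl] at h0
      norm_num [Finset.sum_insert, Finset.mem_insert, Nat.factorial] at h0
      have h1 : 2 + (1-ζ) = 0 := by linear_combination (2 : ℂ) * h0
      have h2 := congrArg Complex.re h1
      simp only [Complex.add_re, Complex.mul_re, Complex.mul_im, Complex.sub_re, Complex.sub_im,
        Complex.one_re, Complex.one_im, Complex.re_ofNat, Complex.im_ofNat, Complex.zero_re] at h2
      linarith
    · simp only [bdfP, show Finset.Icc 1 3 = ({1,2,3} : Finset ℕ) from rfl] at h0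
      norm_num [Finset.sum_insert, Finset.mem_insert, Nat.factorial] at h0
      have h1 : 6 + 3*(1-ζ) + (1-ζ)*(1-ζ) = 0 := by linear_combination (6 : ℂ) * h0
      have h2 := congrArg Complex.re h1
      simp only [Complex.add_re, Complex.mul_re, Complex.mul_im, Complex.sub_re, Complex.sub_im,
        Complex.one_re, Complex.one_im, Complex.re_ofNat, Complex.im_ofNat, Complex.zero_re] at h2
      nlinarith [mul_nonneg hd hx, hd, sq_nonneg ζ.im, pow_nonneg hx 2]
    · simp only [bdfP, show Finset.Icc 1 4 = ({1,2,3,4} : Finset ℕ) from rfl] at h0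
      norm_num [Finset.sum_insert, Finset.mem_insert, Nat.factorial] at h0
      have h1 : 24 + 12*(1-ζ) + 4*((1-ζ)*(1-ζ)) + (1-ζ)*(1-ζ)*(1-ζ) = 0 := by
        linear_combination (24 : ℂ) * h0
      have h2 := congrArg Complex.re h1
      simp only [Complex.add_re, Complex.mul_re, Complex.mul_im, Complex.sub_re, Complex.sub_im,
        Complex.one_re, Complex.one_im, Complex.re_ofNat, Complex.im_ofNat, Complex.zero_re] at h2
      nlinarith [mul_nonneg hd hx, mul_nonneg (mul_nonneg hd hx) hx, hd, sq_nonneg ζ.im,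
        pow_nonneg hx 2, pow_nonneg hx 3]
    · simp only [bdfP, show Finset.Icc 1 5 = ({1,2,3,4,5} : Finset ℕ) from rfl] at h0
      norm_num [Finset.sum_insert, Finset.mem_insert, Nat.factorial] at h0
      have h1 : 120 + 60*(1-ζ) + 20*((1-ζ)*(1-ζ)) + 5*((1-ζ)*(1-ζ)*(1-ζ))
          + (1-ζ)*(1-ζ)*(1-ζ)*(1-ζ) = 0 := by
        linear_combination (120 : ℂ) * h0
      have h2 := congrArg Complex.re h1
      simp only [Complex.add_re, Complex.mul_re, Complex.mul_im, Complex.sub_re, Complex.sub_im,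
        Complex.one_re, Complex.one_im, Complex.re_ofNat, Complex.im_ofNat, Complex.zero_re] at h2
      nlinarith [mul_nonneg hd hx, mul_nonneg (mul_nonneg hd hx) hx,
        mul_nonneg (mul_nonneg (mul_nonneg hd hx) hx) hx, hd, sq_nonneg ζ.im, sq_nonneg (ζ.im^2),
        mul_nonneg hx (sq_nonneg (ζ.im^2)), pow_nonneg hx 2, pow_nonneg hx 3, pow_nonneg hx 4]
    · simp only [bdfP, show Finset.Icc 1 6 = ({1,2,3,4,5,6} : Finset ℕ) from rfl] at h0
      norm_num [Finset.sum_insert, Finset.mem_insert, Nat.factorial] at h0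
      have h1 : 720 + 360*(1-ζ) + 120*((1-ζ)*(1-ζ)) + 30*((1-ζ)*(1-ζ)*(1-ζ))
          + 6*((1-ζ)*(1-ζ)*(1-ζ)*(1-ζ)) + (1-ζ)*(1-ζ)*(1-ζ)*(1-ζ)*(1-ζ) = 0 := by
        linear_combination (720 : ℂ) * h0
      have h2 := congrArg Complex.re h1
      simp only [Complex.add_re, Complex.mul_re, Complex.mul_im, Complex.sub_re, Complex.sub_im,
        Complex.one_re, Complex.one_im, Complex.re_ofNat, Complex.im_ofNat, Complex.zero_re] at h2
      nlinarith [mul_nonneg hd hx, mul_nonneg (mul_nonneg hd hx) hx,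
        mul_nonneg (mul_nonneg (mul_nonneg hd hx) hx) hx, hd, sq_nonneg ζ.im, sq_nonneg (ζ.im^2),
        mul_nonneg hx (sq_nonneg (ζ.im^2)), pow_nonneg hx 2, pow_nonneg hx 3, pow_nonneg hx 4,
        pow_nonneg hx 5]
  · intro ζ
    rw [bdfDelta, bdfP, Finset.mul_sum]
    refine Finset.sum_congr rfl fun i hi => ?_
    obtain ⟨h1i, -⟩ := Finset.mem_Icc.mp hi
    rw [← mul_div_assoc, ← pow_succ', Nat.sub_add_cancel h1i]
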